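/- arXiv:1502.04377 — 4 statements merged into one kernel-verified Lean document; each statement's English description precedes it below -/
import Mathlib

section
/- For every real t with 0 < |t| < 1/2, the series Σ_{n≥0} a(n)·tⁿ converges and its sum equals (1 − √(1 − 4t²)) / (2t²), where a(n) is the number of sequences w : Fin n → ℤ with every entry in {-1, 1}, all partial sums nonnegative, and total sum 0. -/
open List DyckStep

def GoodPred (n : ℕ) (w : Fin n → ℤ) : Prop :=
  (∀ i, w i = -1 ∨ w i = 1) ∧
    (∀ i : ℕ, i ≤ n → 0 ≤ ∑ j ∈ Finset.univ.filter (fun j : Fin n => (j : ℕ) < i), w j) ∧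
    (∑ j, w j) = 0

def wordToList {n : ℕ} (w : Fin n → ℤ) : List DyckStep :=
  List.ofFn fun j => if w j = 1 then U else D

lemma core {n : ℕ} (w : Fin n → ℤ) (hw : ∀ i, w i = -1 ∨ w i = 1) (i : ℕ) :
    ((((wordToList w).take i).count U : ℤ) - (((wordToList w).take i).count D : ℤ))
    = ∑ j ∈ Finset.univ.filter (fun j : Fin n => (j : ℕ) < i), w j := by
  unfold wordToList
  induction i with
  | zero => simp
  | succ i ih =>
    by_cases h : i < n
    · have hfins : Finset.univ.filter (fun j : Fin n => (j : ℕ) < i + 1)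
        = insert ⟨i, h⟩ (Finset.univ.filter (fun j : Fin n => (j : ℕ) < i)) := by
        ext j; simp [Finset.mem_insert, Fin.ext_iff]; omega
      have hnotmem : (⟨i, h⟩ : Fin n) ∉ Finset.univ.filter (fun j : Fin n => (j : ℕ) < i) := by
        simp
      rw [hfins, Finset.sum_insert hnotmem, ← ih, List.take_succ]
      have hlen : i < (List.ofFn fun j => if w j = 1 then U else D).length := by
        simpa using h
      rw [List.getElem?_eq_getElem hlen]
      rcases hw ⟨i, h⟩ with h1 | h1 <;>
        simp [List.count_append, h1, List.getElem_ofFn, show (-1 : ℤ) ≠ 1 by norm_num] <;> ring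
    · have hn : n ≤ i := le_of_not_gt h
      have hfins : Finset.univ.filter (fun j : Fin n => (j : ℕ) < i + 1)
        = Finset.univ.filter (fun j : Fin n => (j : ℕ) < i) := by
        ext j; simp; omega
      have hlen : (List.ofFn fun j => if w j = 1 then U else D).length ≤ i := by simpa using hn
      rw [hfins, ← ih, List.take_of_length_le (by omega), List.take_of_length_le hlen]

lemma count_add_count (l : List DyckStep) : l.count U + l.count D = l.length := by
  induction l with
  | nil => rfl
  | cons a l ih => cases a <;> simp [List.count_cons, ← ih] <;> ring

lemma sum_univ_eq (n : ℕ) (w : Fin n → ℤ) :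
    ∑ j ∈ Finset.univ.filter (fun j : Fin n => (j : ℕ) < n), w j = ∑ j, w j := by
  apply Finset.sum_congr _ (fun _ _ => rfl)
  ext j; simp [j.isLt]

section
variable {n : ℕ} {w : Fin n → ℤ}

lemma total_eq (hw : GoodPred n w) : ((wordToList w).count U : ℤ) - (wordToList w).count D = 0 := by
  have h1 := core w hw.1 n
  rw [List.take_of_length_le (by simp [wordToList]), sum_univ_eq, hw.2.2] at h1
  exact h1

lemma wtl_count_eq (hw : GoodPred n w) : (wordToList w).count U = (wordToList w).count D := by
  have := total_eq hw; omega

lemma wtl_prefix (hw : GoodPred n w) (i : ℕ) :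
    ((wordToList w).take i).count D ≤ ((wordToList w).take i).count U := by
  have hc := core w hw.1 i
  by_cases h : i ≤ n
  · have h2 := hw.2.1 i h
    omega
  · rw [List.take_of_length_le (by simp [wordToList]; omega)]
    have := wtl_count_eq hw
    omega

def toDyck (hw : GoodPred n w) : DyckWord := ⟨wordToList w, wtl_count_eq hw, wtl_prefix hw⟩

lemma toDyck_semilength (hw : GoodPred n w) : (toDyck hw).semilength * 2 = n := by
  have h1 := total_eq hw
  have h2 := count_add_count (wordToList w)
  have h3 : (wordToList w).length = n := by simp [wordToList]
  show (wordToList w).count U * 2 = n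
  omega

end

section
variable {k : ℕ}

lemma dyck_length (p : DyckWord) (hp : p.semilength = k) : p.toList.length = 2 * k := by
  have := p.two_mul_semilength_eq_length
  rw [hp] at this; omega

def ofDyck (p : DyckWord) (hp : p.semilength = k) : Fin (2 * k) → ℤ := fun i =>
  if p.toList[(i : ℕ)]'(by rw [dyck_length p hp]; omega) = U then 1 else -1

lemma wordToList_ofDyck (p : DyckWord) (hp : p.semilength = k) : wordToList (ofDyck p hp) = p.toList := by
  apply List.ext_getElem (by simp [wordToList, dyck_length p hp])
  intro m h1 h2
  simp only [wordToList, List.getElem_ofFn, ofDyck]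
  rcases (p.toList[m]'h2).dichotomy with h | h <;> simp [h]

lemma ofDyck_good (p : DyckWord) (hp : p.semilength = k) : GoodPred (2 * k) (ofDyck p hp) := by
  refine ⟨fun i => by unfold ofDyck; split <;> simp, ?_, ?_⟩
  · intro i hi
    have hc := core (ofDyck p hp) (fun i => by unfold ofDyck; split <;> simp) i
    rw [wordToList_ofDyck p hp] at hc
    have := p.count_D_le_count_U i
    omega
  · have hc := core (ofDyck p hp) (fun i => by unfold ofDyck; split <;> simp) (2 * k)
    rw [wordToList_ofDyck p hp, List.take_of_length_le (by rw [dyck_length p hp]),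
      sum_univ_eq] at hc
    have := p.count_U_eq_count_D
    omega

end

noncomputable def goodEquiv (k : ℕ) :
    {w : Fin (2 * k) → ℤ // GoodPred (2 * k) w} ≃ {p : DyckWord // p.semilength = k} where
  toFun w := ⟨toDyck w.2, by have := toDyck_semilength w.2; omega⟩
  invFun p := ⟨ofDyck p.1 p.2, ofDyck_good p.1 p.2⟩
  left_inv w := by
    apply Subtype.ext
    funext i
    show (if (toDyck w.2).toList[(i : ℕ)]'_ = U then (1 : ℤ) else -1) = w.1 i
    show (if (wordToList w.1)[(i : ℕ)]'_ = U then (1 : ℤ) else -1) = w.1 i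
    simp only [wordToList, List.getElem_ofFn, Fin.eta]
    rcases w.2.1 i with h | h <;> simp [h, show (-1 : ℤ) ≠ 1 by norm_num]
  right_inv p := by
    apply Subtype.ext
    apply DyckWord.ext
    exact wordToList_ofDyck p.1 p.2

lemma goodCount_even (k : ℕ) :
    Nat.card {w : Fin (2 * k) → ℤ // GoodPred (2 * k) w} = catalan k := by
  rw [Nat.card_congr (goodEquiv k), Nat.card_eq_fintype_card,
    DyckWord.card_dyckWord_semilength_eq_catalan]

lemma goodCount_odd (n : ℕ) (hn : ¬ Even n) :
    Nat.card {w : Fin n → ℤ // GoodPred n w} = 0 := by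
  rw [Nat.card_eq_zero]
  left
  constructor
  rintro ⟨w, hw1, -, hw3⟩
  apply hn
  have h2 : ∀ j, (2 : ℤ) ∣ (w j + 1) := by
    intro j; rcases hw1 j with h | h <;> simp [h]
  have : (2 : ℤ) ∣ ∑ j, (w j + 1) := Finset.dvd_sum fun j _ => h2 j
  rw [Finset.sum_add_distrib, hw3, zero_add, Finset.sum_const] at this
  simp only [Finset.card_univ, Fintype.card_fin, nsmul_eq_mul, mul_one] at this
  have h4 : (2 : ℕ) ∣ n := by exact_mod_cast this
  exact even_iff_two_dvd.mpr h4

open scoped BigOperators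

lemma catalan_le_four_pow (n : ℕ) : catalan n ≤ 4 ^ n := by
  have h1 : catalan n ≤ n.centralBinom := by
    rw [catalan_eq_centralBinom_div]
    exact Nat.div_le_self _ _
  have h2 : n.centralBinom ≤ 4 ^ n := by
    have : n.centralBinom ≤ ∑ m ∈ Finset.range (2 * n + 1), (2 * n).choose m :=
      Finset.single_le_sum (f := fun m => (2 * n).choose m) (fun _ _ => Nat.zero_le _)
        (Finset.mem_range.mpr (by omega))
    rw [Nat.sum_range_choose] at this
    calc n.centralBinom ≤ 2 ^ (2 * n) := this
      _ = 4 ^ n := by rw [pow_mul]; norm_num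
  omega

noncomputable def catGF (x : ℝ) : ℝ := ∑' k : ℕ, (catalan k : ℝ) * x ^ k

lemma cat_summable {x : ℝ} (hx : |x| < 1 / 4) :
    Summable (fun k : ℕ => ‖(catalan k : ℝ) * x ^ k‖) := by
  have hg : Summable (fun k : ℕ => (4 * |x|) ^ k) :=
    summable_geometric_of_lt_one (r := 4 * |x|) (by positivity) (by nlinarith [abs_nonneg x])
  refine Summable.of_nonneg_of_le (fun k => norm_nonneg _) (fun k => ?_) hg
  rw [norm_mul, norm_pow, Real.norm_natCast, Real.norm_eq_abs, mul_pow]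
  exact mul_le_mul_of_nonneg_right (by exact_mod_cast catalan_le_four_pow k) (by positivity)

lemma cat_hasSum {x : ℝ} (hx : |x| < 1 / 4) :
    HasSum (fun k : ℕ => (catalan k : ℝ) * x ^ k) (catGF x) :=
  ((cat_summable hx).of_norm).hasSum

lemma catalan_sum_range (n : ℕ) :
    ∑ i ∈ Finset.range (n + 1), (catalan i) * catalan (n - i) = catalan (n + 1) := by
  rw [catalan_succ]
  exact (Fin.sum_univ_eq_sum_range (fun i => catalan i * catalan (n - i)) (n + 1)).symm

lemma cat_quadratic {x : ℝ} (hx0 : 0 < x) (hx : x < 1 / 4) :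
    x * catGF x ^ 2 = catGF x - 1 := by
  have habs : |x| < 1 / 4 := by rw [abs_of_pos hx0]; exact hx
  have hsum := cat_summable habs
  have hmul : catGF x * catGF x = ∑' n : ℕ,
      ∑ k ∈ Finset.range (n + 1), ((catalan k : ℝ) * x ^ k) * ((catalan (n - k) : ℝ) * x ^ (n - k)) :=
    tsum_mul_tsum_eq_tsum_sum_range_of_summable_norm hsum hsum
  have hterm : ∀ n : ℕ, ∑ k ∈ Finset.range (n + 1),
      ((catalan k : ℝ) * x ^ k) * ((catalan (n - k) : ℝ) * x ^ (n - k))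
      = (catalan (n + 1) : ℝ) * x ^ n := by
    intro n
    have : ∀ k ∈ Finset.range (n + 1),
        ((catalan k : ℝ) * x ^ k) * ((catalan (n - k) : ℝ) * x ^ (n - k))
        = ((catalan k : ℝ) * (catalan (n - k) : ℝ)) * x ^ n := by
      intro k hk
      rw [Finset.mem_range] at hk
      have : x ^ k * x ^ (n - k) = x ^ n := by
        rw [← pow_add]; congr 1; omega
      calc ((catalan k : ℝ) * x ^ k) * ((catalan (n - k) : ℝ) * x ^ (n - k))
          = ((catalan k : ℝ) * (catalan (n - k) : ℝ)) * (x ^ k * x ^ (n - k)) := by ring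
        _ = ((catalan k : ℝ) * (catalan (n - k) : ℝ)) * x ^ n := by rw [this]
    rw [Finset.sum_congr rfl this, ← Finset.sum_mul]
    congr 1
    exact_mod_cast congrArg (Nat.cast : ℕ → ℝ) (catalan_sum_range n)
  rw [tsum_congr hterm] at hmul
  -- shifted series
  have hS := cat_hasSum habs
  have hxne : x ≠ 0 := ne_of_gt hx0
  have hshift : HasSum (fun n : ℕ => (catalan (n + 1) : ℝ) * x ^ (n + 1)) (catGF x - 1) := by
    refine (hasSum_nat_add_iff (f := fun k : ℕ => (catalan k : ℝ) * x ^ k) 1).mpr ?_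
    simpa using hS
  have hshift2 : HasSum (fun n : ℕ => (catalan (n + 1) : ℝ) * x ^ n) (x⁻¹ * (catGF x - 1)) := by
    have h2 := hshift.mul_left x⁻¹
    have h3 : (fun n : ℕ => (catalan (n + 1) : ℝ) * x ^ n)
        = fun i : ℕ => x⁻¹ * ((catalan (i + 1) : ℝ) * x ^ (i + 1)) := by
      funext n
      rw [pow_succ]
      field_simp
    rw [h3]
    exact h2
  rw [hshift2.tsum_eq] at hmul
  field_simp at hmul ⊢
  nlinarith [hmul]

lemma catGF_bound {x : ℝ} (hx0 : 0 ≤ x) (hx : x < 1 / 4) : catGF x ≤ (1 - 4 * x)⁻¹ := by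
  have habs : |x| < 1 / 4 := by rw [abs_of_nonneg hx0]; exact hx
  have h1 : Summable (fun k : ℕ => (catalan k : ℝ) * x ^ k) := (cat_summable habs).of_norm
  have h2 : Summable (fun k : ℕ => (4 * x) ^ k) :=
    summable_geometric_of_lt_one (r := 4 * x) (by positivity) (by linarith)
  have h3 : catGF x ≤ ∑' k : ℕ, (4 * x) ^ k := by
    refine Summable.tsum_le_tsum (fun k => ?_) h1 h2
    rw [mul_pow]
    exact mul_le_mul_of_nonneg_right (by exact_mod_cast catalan_le_four_pow k)
      (by positivity)
  rwa [tsum_geometric_of_lt_one (by positivity) (by linarith)] at h3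

lemma catGF_continuousOn {c : ℝ} (hc4 : c < 1 / 4) :
    ContinuousOn catGF (Set.Icc 0 c) := by
  rcases le_or_gt c 0 with hc | hc
  · rcases lt_or_eq_of_le hc with h | h
    · rw [Set.Icc_eq_empty (by simpa using not_le.mpr h)]
      exact continuousOn_empty _
    · rw [h, Set.Icc_self]
      exact continuousOn_singleton _ _
  have habs : |c| < 1 / 4 := by rw [abs_of_pos hc]; exact hc4
  refine continuousOn_tsum (f := fun k x => (catalan k : ℝ) * x ^ k)
    (u := fun k => (catalan k : ℝ) * c ^ k)
    (fun k => (continuous_const.mul (continuous_pow k)).continuousOn) ?_ ?_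
  · exact (cat_summable habs).of_norm
  · intro k x hx
    rw [norm_mul, norm_pow, Real.norm_natCast, Real.norm_eq_abs]
    refine mul_le_mul_of_nonneg_left (pow_le_pow_left₀ (abs_nonneg x) ?_ k) (by positivity)
    rw [abs_le]
    exact ⟨by linarith [hx.1, hc], hx.2⟩

lemma catGF_key {x : ℝ} (hx0 : 0 < x) (hx : x < 1 / 4) :
    (2 * x * catGF x - 1) ^ 2 = 1 - 4 * x := by
  have := cat_quadratic hx0 hx
  nlinarith [this]

lemma catGF_small {x : ℝ} (hx0 : 0 < x) (hx : x ≤ 1 / 8) : 2 * x * catGF x - 1 < 0 := by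
  have hb := catGF_bound (le_of_lt hx0) (by linarith)
  have h1 : (0 : ℝ) < 1 - 4 * x := by linarith
  have h2 : 2 * x * catGF x ≤ 2 * x * (1 - 4 * x)⁻¹ :=
    mul_le_mul_of_nonneg_left hb (by positivity)
  have h3 : 2 * x * (1 - 4 * x)⁻¹ < 1 := by
    rw [mul_inv_lt_iff₀ h1]  -- might not exist; fallback below
    linarith
  linarith

lemma catGF_neg {x : ℝ} (hx0 : 0 < x) (hx : x < 1 / 4) : 2 * x * catGF x - 1 < 0 := by
  by_cases hx8 : x ≤ 1 / 8
  · exact catGF_small hx0 hx8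
  push_neg at hx8
  set g : ℝ → ℝ := fun y => 2 * y * catGF y - 1 with hg
  have hgc : ContinuousOn g (Set.Icc (1/8 : ℝ) x) := by
    apply ContinuousOn.sub _ continuousOn_const
    apply ContinuousOn.mul (by fun_prop)
    exact (catGF_continuousOn hx).mono (Set.Icc_subset_Icc (by norm_num) le_rfl)
  have h18 : g (1/8 : ℝ) < 0 := catGF_small (by norm_num) (by norm_num)
  by_contra hcon
  push_neg at hcon
  have h0mem : (0 : ℝ) ∈ Set.Icc (g (1/8 : ℝ)) (g x) := ⟨le_of_lt h18, hcon⟩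
  obtain ⟨z, hz, hz0⟩ := intermediate_value_Icc (le_of_lt hx8) hgc h0mem
  have hz1 : 0 < z := lt_of_lt_of_le (by norm_num) hz.1
  have hz2 : z < 1 / 4 := lt_of_le_of_lt hz.2 hx
  have := catGF_key hz1 hz2
  have hz0' : 2 * z * catGF z - 1 = 0 := hz0
  rw [hz0'] at this
  simp at this
  linarith

lemma cat_closed {x : ℝ} (hx0 : 0 < x) (hx : x < 1 / 4) :
    HasSum (fun k : ℕ => (catalan k : ℝ) * x ^ k)
      ((1 - Real.sqrt (1 - 4 * x)) / (2 * x)) := by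
  have habs : |x| < 1 / 4 := by rw [abs_of_pos hx0]; exact hx
  have hS := cat_hasSum habs
  suffices h : catGF x = (1 - Real.sqrt (1 - 4 * x)) / (2 * x) by rw [← h]; exact hS
  have hsq : (1 - 2 * x * catGF x) ^ 2 = 1 - 4 * x := by
    have := catGF_key hx0 hx; nlinarith [this]
  have hpos : 0 ≤ 1 - 2 * x * catGF x := by have := catGF_neg hx0 hx; linarith
  have hs : Real.sqrt (1 - 4 * x) = 1 - 2 * x * catGF x := by
    rw [← hsq, Real.sqrt_sq hpos]
  rw [hs]
  field_simp
  ring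

/-- The number of sequences `w : Fin n → ℤ` with every entry in `{-1, 1}`,
all partial sums `Σ_{j<i} w j` (for `i ≤ n`) nonnegative, and total sum `0`. -/
noncomputable def goodCount (n : ℕ) : ℕ :=
  Nat.card {w : Fin n → ℤ //
    (∀ i, w i = -1 ∨ w i = 1) ∧
    (∀ i : ℕ, i ≤ n → 0 ≤ ∑ j ∈ Finset.univ.filter (fun j : Fin n => (j : ℕ) < i), w j) ∧
    (∑ j, w j) = 0}

lemma goodCount_eq (n : ℕ) : goodCount n = Nat.card {w : Fin n → ℤ // GoodPred n w} := rfl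

lemma goodCount_two_mul (k : ℕ) : goodCount (2 * k) = catalan k := by
  rw [goodCount_eq]; exact goodCount_even k

theorem stmt1 (t : ℝ) (ht0 : 0 < |t|) (ht : |t| < 1 / 2) :
    HasSum (fun n : ℕ => (goodCount n : ℝ) * t ^ n)
      ((1 - Real.sqrt (1 - 4 * t ^ 2)) / (2 * t ^ 2)) := by
  have htne : t ≠ 0 := by
    intro h; rw [h] at ht0; simp at ht0
  have hx0 : 0 < t ^ 2 := by positivity
  have hx4 : t ^ 2 < 1 / 4 := by
    have h1 : |t| * |t| < (1 / 2) * (1 / 2) :=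
      mul_lt_mul'' ht ht (abs_nonneg t) (abs_nonneg t)
    calc t ^ 2 = |t| * |t| := by rw [← sq_abs t]; ring
      _ < 1 / 4 := by linarith
  have hcat := cat_closed hx0 hx4
  have hinj : Function.Injective (fun k : ℕ => 2 * k) := fun a b h => by simpa using h
  have hodd : ∀ n, n ∉ Set.range (fun k : ℕ => 2 * k) → (goodCount n : ℝ) * t ^ n = 0 := by
    intro n hn
    have hne : ¬ Even n := by
      intro ⟨r, hr⟩
      exact hn ⟨r, by simpa using (by omega : 2 * r = n)⟩
    rw [goodCount_eq, goodCount_odd n hne]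
    simp
  rw [← Function.Injective.hasSum_iff hinj hodd]
  have hfun : ((fun n : ℕ => (goodCount n : ℝ) * t ^ n) ∘ (fun k : ℕ => 2 * k))
      = fun k : ℕ => (catalan k : ℝ) * (t ^ 2) ^ k := by
    funext k
    simp only [Function.comp_apply]
    rw [goodCount_two_mul, ← pow_mul, mul_comm 2 k]
  rw [hfun]
  exact hcat
end

section
/- For every n ∈ ℕ, letting a(2n) be the number of sequences w : Fin (2n) → ℤ with every entry in {-1, 1}, all partial sums nonnegative, and total sum 0, one has a(2n) · n! · (n+1)! = (2n)!. -/
open DyckStep List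

private def toW : DyckStep → ℤ := fun s => if s = U then 1 else -1
private def toS : ℤ → DyckStep := fun x => if x = 1 then U else D

private lemma toW_toS (x : ℤ) (h : x = -1 ∨ x = 1) : toW (toS x) = x := by
  rcases h with h | h <;> simp [toW, toS, h]

private lemma toS_toW (s : DyckStep) : toS (toW s) = s := by
  cases s <;> simp [toW, toS]

private lemma toW_mem (s : DyckStep) : toW s = -1 ∨ toW s = 1 := by
  cases s <;> simp [toW]

private lemma sum_map_toW (l : List DyckStep) :
    (l.map toW).sum = (l.count U : ℤ) - l.count D := by
  induction l with
  | nil => simp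
  | cons s t ih => cases s <;> simp [toW, ih, count_cons] <;> ring

private def theList {m : ℕ} (w : Fin m → ℤ) : List DyckStep := (List.ofFn w).map toS

private def theFun {m : ℕ} (l : List DyckStep) (h : l.length = m) : Fin m → ℤ :=
  fun i => toW (l.get (Fin.cast h.symm i))

private lemma theList_length {m : ℕ} (w : Fin m → ℤ) : (theList w).length = m := by
  simp [theList]

private lemma theFun_theList {m : ℕ} (w : Fin m → ℤ) (h1 : ∀ i, w i = -1 ∨ w i = 1) :
    theFun (theList w) (theList_length w) = w := by
  funext i
  simp only [theFun, theList, List.get_eq_getElem, List.getElem_map, List.getElem_ofFn]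
  rw [toW_toS _ (h1 _)]
  exact congrArg w (Fin.ext (by rfl))

private lemma ofFn_theFun {m : ℕ} (l : List DyckStep) (h : l.length = m) :
    List.ofFn (theFun l h) = l.map toW := by
  subst h
  exact List.ext_getElem (by simp) (by simp [theFun])

private lemma theList_theFun {m : ℕ} (l : List DyckStep) (h : l.length = m) :
    theList (theFun l h) = l := by
  rw [theList, ofFn_theFun, List.map_map]
  exact (List.map_congr_left fun x _ => toS_toW x).trans (List.map_id _)

private lemma map_toW_theList {m : ℕ} (w : Fin m → ℤ) (h1 : ∀ i, w i = -1 ∨ w i = 1) :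
    (theList w).map toW = List.ofFn w := by
  rw [theList, List.map_map]
  refine (List.map_congr_left fun x hx => ?_).trans (List.map_id _)
  obtain ⟨i, rfl⟩ := Set.mem_range.mp (List.mem_ofFn.mp hx)
  exact toW_toS _ (h1 i)

private lemma goodProp_iff {m : ℕ} (w : Fin m → ℤ) (h1 : ∀ i, w i = -1 ∨ w i = 1) :
    ((∀ i : ℕ, i ≤ m → 0 ≤ ∑ j ∈ Finset.univ.filter (fun j : Fin m => (j : ℕ) < i), w j) ∧
      (∑ j, w j) = 0) ↔
    ((theList w).count U = (theList w).count D ∧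
      ∀ i, ((theList w).take i).count D ≤ ((theList w).take i).count U) := by
  have hmap := map_toW_theList w h1
  constructor
  · rintro ⟨h2, h3⟩
    have h2' : ∀ i : ℕ,
        0 ≤ ∑ j ∈ Finset.univ.filter (fun j : Fin m => (j : ℕ) < i), w j := by
      intro i
      rcases le_or_gt i m with hi | hi
      · exact h2 i hi
      · have : (Finset.univ.filter fun j : Fin m => (j : ℕ) < i) = Finset.univ :=
          Finset.filter_true_of_mem fun j _ => lt_trans j.isLt hi
        rw [this, h3]
    constructor
    · have hs := sum_map_toW (theList w)
      rw [hmap, List.sum_ofFn, h3] at hs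
      exact_mod_cast (sub_eq_zero.mp hs.symm)
    · intro i
      have hs := sum_map_toW ((theList w).take i)
      rw [List.map_take, hmap, List.sum_take_ofFn] at hs
      have := h2' i
      rw [hs] at this
      exact_mod_cast sub_nonneg.mp this
  · rintro ⟨hU, hle⟩
    constructor
    · intro i _
      have hs := sum_map_toW ((theList w).take i)
      rw [List.map_take, hmap, List.sum_take_ofFn] at hs
      rw [hs]
      have := hle i
      have : ((((theList w).take i).count D : ℤ)) ≤ (((theList w).take i).count U : ℤ) := by
        exact_mod_cast this
      linarith
    · have hs := sum_map_toW (theList w)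
      rw [hmap, List.sum_ofFn, hU] at hs
      simpa using hs

theorem stmt3 (n : ℕ) :
    goodCount (2 * n) * Nat.factorial n * Nat.factorial (n + 1) =
      Nat.factorial (2 * n) := by
  have key : goodCount (2 * n) = catalan n := by
    rw [goodCount, ← DyckWord.card_dyckWord_semilength_eq_catalan, ← Nat.card_eq_fintype_card]
    apply Nat.card_congr
    refine
      { toFun := fun x =>
          ⟨⟨theList x.1, ((goodProp_iff x.1 x.2.1).mp x.2.2).1,
            ((goodProp_iff x.1 x.2.1).mp x.2.2).2⟩, ?_⟩
        invFun := fun p =>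
          ⟨theFun p.1.toList ?_, fun i => toW_mem _, ?_⟩
        left_inv := ?_
        right_inv := ?_ }
    · have := DyckWord.two_mul_semilength_eq_length
        (p := ⟨theList x.1, ((goodProp_iff x.1 x.2.1).mp x.2.2).1,
          ((goodProp_iff x.1 x.2.1).mp x.2.2).2⟩)
      simp only [theList_length] at this
      omega
    · have := p.1.two_mul_semilength_eq_length
      rw [p.2] at this
      exact this.symm
    · have hlen : p.1.toList.length = 2 * n := by
        have := p.1.two_mul_semilength_eq_length
        rw [p.2] at this
        exact this.symm
      refine (goodProp_iff (theFun p.1.toList hlen) (fun i => toW_mem _)).mpr ?_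
      rw [theList_theFun]
      exact ⟨p.1.count_U_eq_count_D, p.1.count_D_le_count_U⟩
    · intro x
      apply Subtype.ext
      exact theFun_theList x.1 x.2.1
    · intro p
      apply Subtype.ext
      apply DyckWord.ext
      exact theList_theFun _ (by
        have := p.1.two_mul_semilength_eq_length
        rw [p.2] at this
        omega)
  rw [key]
  have hc : (n + 1) * catalan n = n.centralBinom := succ_mul_catalan_eq_centralBinom n
  have hb : (2 * n).choose n * n.factorial * n.factorial = (2 * n).factorial := by
    have := Nat.choose_mul_factorial_mul_factorial (n := 2 * n) (k := n) (by omega)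
    simpa [show 2 * n - n = n by omega] using this
  rw [Nat.centralBinom] at hc
  calc catalan n * n.factorial * (n + 1).factorial
      = ((n + 1) * catalan n) * n.factorial * n.factorial := by
        rw [Nat.factorial_succ]; ring
    _ = (2 * n).choose n * n.factorial * n.factorial := by rw [hc]
    _ = (2 * n).factorial := hb
end

section
/- The formal power series Σ_{n≥0} n!·tⁿ ∈ ℚ[[t]] is not algebraic over the polynomial ring ℚ[t]: there is no nonzero polynomial P with coefficients in ℚ[t] such that P(Σ_{n≥0} n!·tⁿ) = 0 in ℚ[[t]]. -/
open PowerSeries Polynomial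

noncomputable section Stmt18Aux

namespace Stmt18Aux

abbrev D := PowerSeries.derivative ℚ

def F : PowerSeries ℚ := PowerSeries.mk (fun n => (Nat.factorial n : ℚ))

theorem ode : (PowerSeries.X^2 : ℚ⟦X⟧) * (D F) = (1 - PowerSeries.X) * F - 1 := by
  have h : (1 - PowerSeries.X) * F - 1 = F - PowerSeries.X * F - 1 := by ring
  rw [h]
  ext n
  rcases n with _ | _ | n
  · simp [F, PowerSeries.coeff_derivative]
  · have : (PowerSeries.coeff 1) ((PowerSeries.X : ℚ⟦X⟧) ^ 2 * D F) = 0 := by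
      rw [PowerSeries.coeff_X_pow_mul']
      simp
    rw [this]
    simp [F, coeff_succ_X_mul, Nat.factorial]
  · rw [show n + 1 + 1 = n + 2 by rfl]
    rw [PowerSeries.coeff_X_pow_mul]
    simp [F, PowerSeries.coeff_derivative, coeff_succ_X_mul, Nat.factorial_succ]
    ring

theorem am_eq (b : Polynomial ℚ) :
    algebraMap (Polynomial ℚ) ℚ⟦X⟧ b = (b : ℚ⟦X⟧) := by
  rw [PowerSeries.algebraMap_apply']
  simp [Polynomial.coe_def]

theorem am_inj (b : Polynomial ℚ) (h : algebraMap (Polynomial ℚ) ℚ⟦X⟧ b = 0) : b = 0 := by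
  rw [am_eq] at h
  ext n
  have := congrArg (PowerSeries.coeff n) h
  rwa [Polynomial.coeff_coe, map_zero] at this

def pd (P : (Polynomial ℚ)[X]) : (Polynomial ℚ)[X] :=
  P.sum fun n a => Polynomial.C (Polynomial.derivative a) * Polynomial.X ^ n

theorem pd_coeff (P : (Polynomial ℚ)[X]) (i : ℕ) :
    (pd P).coeff i = Polynomial.derivative (P.coeff i) := by
  rw [pd, Polynomial.sum_def, Polynomial.finset_sum_coeff]
  simp only [Polynomial.coeff_C_mul, Polynomial.coeff_X_pow, mul_ite, mul_one, mul_zero]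
  rw [Finset.sum_ite_eq P.support i]
  by_cases h : i ∈ P.support
  · simp [h]
  · simp [h, Polynomial.notMem_support_iff.mp h]

theorem pd_add (P Q : (Polynomial ℚ)[X]) : pd (P + Q) = pd P + pd Q := by
  ext i; simp [pd_coeff]

theorem pd_monomial (n : ℕ) (a : Polynomial ℚ) :
    pd (monomial n a) = Polynomial.monomial n (Polynomial.derivative a) := by
  ext i
  rw [pd_coeff]
  by_cases h : n = i <;> simp [Polynomial.coeff_monomial, h]

theorem D_algebraMap (a : Polynomial ℚ) :
    D (algebraMap (Polynomial ℚ) ℚ⟦X⟧ a)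
      = algebraMap (Polynomial ℚ) ℚ⟦X⟧ (Polynomial.derivative a) := by
  rw [am_eq, am_eq, PowerSeries.derivative_coe]

theorem chain (f : ℚ⟦X⟧) (P : (Polynomial ℚ)[X]) :
    D (aeval f P) = aeval f (Polynomial.derivative P) * D f + aeval f (pd P) := by
  induction P using Polynomial.induction_on' with
  | add p q hp hq => simp [pd_add, map_add, hp, hq]; ring
  | monomial n a =>
    rw [aeval_monomial, pd_monomial, aeval_monomial, Polynomial.derivative_monomial,
      aeval_monomial]
    rw [Derivation.leibniz, D_algebraMap, Derivation.leibniz_pow]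
    rcases n with _ | n
    · simp
    · simp only [smul_eq_mul, map_mul, map_natCast, Nat.add_sub_cancel]
      push_cast
      ring

theorem c1 (p q : Polynomial ℚ) :
    (derivative p * q).coeff (p.natDegree + q.natDegree - 1)
      = p.natDegree * p.leadingCoeff * q.leadingCoeff := by
  rcases Nat.eq_zero_or_pos p.natDegree with h | h
  · have : derivative p = 0 := by
      rw [Polynomial.eq_C_of_natDegree_eq_zero h]; simp
    simp [this, h]
  · obtain ⟨a, ha⟩ : ∃ a, p.natDegree = a + 1 := ⟨p.natDegree - 1, by omega⟩
    have hidx : p.natDegree + q.natDegree - 1 = a + q.natDegree := by omega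
    rw [hidx, coeff_mul_add_eq_of_natDegree_le (by simpa [ha] using p.natDegree_derivative_le) le_rfl,
      Polynomial.coeff_derivative, ← ha, Polynomial.coeff_natDegree, Polynomial.coeff_natDegree, ha]
    push_cast
    ring

theorem no_sol' (p q : Polynomial ℚ) (hp : p ≠ 0) (hq : q ≠ 0) (n : ℕ) (hn : 1 ≤ n)
    (a b : ℕ) (ha : p.natDegree = a) (hb : q.natDegree = b)
    (h : (Polynomial.X : Polynomial ℚ)^2 * (derivative p * q - derivative q * p)
        = (1 - Polynomial.X) * (p * q) + (n : Polynomial ℚ) * q^2) : False := by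
  have hpa : p.leadingCoeff ≠ 0 := leadingCoeff_ne_zero.mpr hp
  have hqb : q.leadingCoeff ≠ 0 := leadingCoeff_ne_zero.mpr hq
  have hpq : (p*q).natDegree ≤ a + b := by
    calc (p*q).natDegree ≤ p.natDegree + q.natDegree := natDegree_mul_le
    _ = a + b := by rw [ha, hb]
  have hq2 : (q^2).natDegree ≤ b + b := by
    calc (q^2).natDegree ≤ 2 * q.natDegree := natDegree_pow_le
    _ = b + b := by rw [hb]; ring
  have hc1 : (derivative p * q).coeff (a + b - 1) = a * p.leadingCoeff * q.leadingCoeff := by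
    have := c1 p q; rwa [ha, hb] at this
  have hc2 : (derivative q * p).coeff (a + b - 1) = b * q.leadingCoeff * p.leadingCoeff := by
    have := c1 q p; rwa [ha, hb, Nat.add_comm b a] at this
  have hL : 1 ≤ a + b →
      ((Polynomial.X : Polynomial ℚ)^2 * (derivative p * q - derivative q * p)).coeff (a+b+1)
        = a * p.leadingCoeff * q.leadingCoeff - b * q.leadingCoeff * p.leadingCoeff := by
    intro h1
    have hidx : a + b + 1 = (a + b - 1) + 2 := by omega
    rw [hidx, Polynomial.coeff_X_pow_mul, Polynomial.coeff_sub, hc1, hc2]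
  have hPQtop : (p * q).coeff (a + b) = p.leadingCoeff * q.leadingCoeff := by
    have := coeff_mul_degree_add_degree p q; rwa [ha, hb] at this
  have hQtop : (q^2).coeff (b + b) = q.leadingCoeff * q.leadingCoeff := by
    have := coeff_mul_degree_add_degree q q; rwa [hb, ← pow_two] at this
  rcases lt_trichotomy b (a+1) with hba | hba | hba
  · rcases Nat.eq_zero_or_pos a with ha0 | ha0
    · have hb0 : b = 0 := by omega
      have hdp : derivative p = 0 := by
        rw [Polynomial.eq_C_of_natDegree_eq_zero (ha.trans ha0)]; simp
      have hdq : derivative q = 0 := by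
        rw [Polynomial.eq_C_of_natDegree_eq_zero (hb.trans hb0)]; simp
      have hc := congrArg (fun r => Polynomial.coeff r 1) h
      simp only [hdp, hdq, zero_mul, mul_zero, sub_zero, sub_self] at hc
      rw [Polynomial.coeff_add, sub_mul, one_mul, Polynomial.coeff_sub,
        coeff_eq_zero_of_natDegree_lt (lt_of_le_of_lt hpq (by omega)),
        Polynomial.coeff_X_mul,
        ← Polynomial.C_eq_natCast, Polynomial.coeff_C_mul,
        coeff_eq_zero_of_natDegree_lt (lt_of_le_of_lt hq2 (by omega)),
        Polynomial.coeff_zero] at hc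
      rw [show (0:ℕ) = a + b by omega, hPQtop] at hc
      have : p.leadingCoeff * q.leadingCoeff = 0 := by linear_combination hc
      exact mul_ne_zero hpa hqb this
    · have hc := congrArg (fun r => Polynomial.coeff r (a + b + 1)) h
      rw [hL (by omega), Polynomial.coeff_add, sub_mul, one_mul, Polynomial.coeff_sub,
        coeff_eq_zero_of_natDegree_lt (lt_of_le_of_lt hpq (by omega)),
        Polynomial.coeff_X_mul, hPQtop,
        ← Polynomial.C_eq_natCast, Polynomial.coeff_C_mul,
        coeff_eq_zero_of_natDegree_lt (lt_of_le_of_lt hq2 (by omega))] at hc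
      have key : ((a : ℚ) + 1) * (p.leadingCoeff * q.leadingCoeff)
          = (b : ℚ) * (p.leadingCoeff * q.leadingCoeff) := by linear_combination hc
      have h2 := mul_right_cancel₀ (mul_ne_zero hpa hqb) key
      have : a + 1 = b := by exact_mod_cast h2
      omega
  · have hc := congrArg (fun r => Polynomial.coeff r (a + b + 1)) h
    rw [hL (by omega), Polynomial.coeff_add, sub_mul, one_mul, Polynomial.coeff_sub,
      coeff_eq_zero_of_natDegree_lt (lt_of_le_of_lt hpq (by omega)),
      Polynomial.coeff_X_mul, hPQtop,
      ← Polynomial.C_eq_natCast, Polynomial.coeff_C_mul,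
      show a + b + 1 = b + b by omega, hQtop] at hc
    have key : (n : ℚ) * (q.leadingCoeff * q.leadingCoeff) = 0 := by
      have hab : (b : ℚ) = (a : ℚ) + 1 := by rw [hba]; push_cast; ring
      linear_combination -hc - (p.leadingCoeff * q.leadingCoeff) * hab
    rcases mul_eq_zero.mp key with h' | h'
    · exact (Nat.cast_ne_zero (R := ℚ)).mpr (by omega) h'
    · exact mul_ne_zero hqb hqb h'
  · have hc := congrArg (fun r => Polynomial.coeff r (b + b)) h
    have hLz : ((Polynomial.X : Polynomial ℚ)^2
        * (derivative p * q - derivative q * p)).coeff (b+b) = 0 := by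
      have hidx : b + b = (b + b - 2) + 2 := by omega
      rw [hidx, Polynomial.coeff_X_pow_mul, Polynomial.coeff_sub]
      have h1 : (derivative p * q).coeff (b + b - 2) = 0 := by
        rcases eq_or_ne (derivative p) 0 with hz | hz
        · simp [hz]
        · apply coeff_eq_zero_of_natDegree_lt
          calc (derivative p * q).natDegree ≤ (derivative p).natDegree + q.natDegree :=
                natDegree_mul_le
          _ ≤ (a - 1) + b := by
                gcongr
                · simpa [ha] using p.natDegree_derivative_le
                · omega
          _ < b + b - 2 := by
                have : 1 ≤ a := by
                  by_contra hcon
                  have : a = 0 := by omega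
                  apply hz
                  rw [Polynomial.eq_C_of_natDegree_eq_zero (ha.trans this)]; simp
                omega
      have h2 : (derivative q * p).coeff (b + b - 2) = 0 := by
        apply coeff_eq_zero_of_natDegree_lt
        calc (derivative q * p).natDegree ≤ (derivative q).natDegree + p.natDegree :=
              natDegree_mul_le
        _ ≤ (b - 1) + a := by
              gcongr
              · simpa [hb] using q.natDegree_derivative_le
              · omega
        _ < b + b - 2 := by omega
      rw [h1, h2]; ring
    have hx : ((Polynomial.X : Polynomial ℚ) * (p * q)).coeff (b + b) = 0 := by
      rw [show b + b = (b + b - 1) + 1 by omega, Polynomial.coeff_X_mul]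
      exact coeff_eq_zero_of_natDegree_lt (lt_of_le_of_lt hpq (by omega))
    rw [hLz, Polynomial.coeff_add, sub_mul, one_mul, Polynomial.coeff_sub,
      coeff_eq_zero_of_natDegree_lt (lt_of_le_of_lt hpq (by omega)), hx,
      ← Polynomial.C_eq_natCast, Polynomial.coeff_C_mul, hQtop] at hc
    have key : (n : ℚ) * (q.leadingCoeff * q.leadingCoeff) = 0 := by
      linear_combination -hc
    rcases mul_eq_zero.mp key with h' | h'
    · exact (Nat.cast_ne_zero (R := ℚ)).mpr (by omega) h'
    · exact mul_ne_zero hqb hqb h'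

theorem no_sol (p q : Polynomial ℚ) (hq : q ≠ 0) (n : ℕ) (hn : 1 ≤ n)
    (h : (Polynomial.X : Polynomial ℚ)^2 * (derivative p * q - derivative q * p)
        = (1 - Polynomial.X) * (p * q) + (n : Polynomial ℚ) * q^2) : False := by
  rcases eq_or_ne p 0 with rfl | hp
  · simp only [derivative_zero, zero_mul, mul_zero, sub_zero, mul_zero] at h
    have hz : ((n : Polynomial ℚ) * q^2) = 0 := by linear_combination -h
    rcases mul_eq_zero.mp hz with h' | h'
    · exact (Nat.cast_ne_zero (R := Polynomial ℚ)).mpr (by omega) h'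
    · exact hq (pow_eq_zero_iff (n := 2) (by norm_num) |>.mp h')
  · exact no_sol' p q hp hq n hn _ _ rfl rfl h

theorem main : ¬ IsAlgebraic (Polynomial ℚ) F := by
  rintro ⟨P0, hP0ne, hP0⟩
  classical
  have hex : ∃ m, ∃ P : (Polynomial ℚ)[X], P ≠ 0 ∧ aeval F P = 0 ∧ P.natDegree = m :=
    ⟨P0.natDegree, P0, hP0ne, hP0, rfl⟩
  obtain ⟨P, hPne, hPF, hPd⟩ := Nat.find_spec hex
  set d := Nat.find hex with hdd
  have hmin : ∀ Q : (Polynomial ℚ)[X], Q ≠ 0 → aeval F Q = 0 → d ≤ Q.natDegree := by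
    intro Q h1 h2
    by_contra hcon
    exact Nat.find_min hex (by omega) ⟨Q, h1, h2, rfl⟩
  have hd1 : 1 ≤ d := by
    by_contra hcon
    have hd0 : P.natDegree = 0 := by omega
    have := Polynomial.eq_C_of_natDegree_eq_zero hd0
    rw [this] at hPF
    rw [aeval_C] at hPF
    have hc0 : P.coeff 0 = 0 := am_inj _ hPF
    exact hPne (by rw [Polynomial.eq_C_of_natDegree_eq_zero hd0, hc0, map_zero])
  -- the modified annihilating polynomial
  set t : Polynomial ℚ := Polynomial.X with ht
  set Q : (Polynomial ℚ)[X] :=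
    Polynomial.C (t^2) * pd P
      + (Polynomial.C (1 - t) * Polynomial.X - 1) * Polynomial.derivative P with hQ
  have hchain := chain F P
  rw [hPF, map_zero] at hchain
  have hQF : aeval F Q = 0 := by
    rw [hQ]
    rw [map_add, map_mul, map_mul, map_sub, map_mul, aeval_C, aeval_C, aeval_X, map_one]
    rw [am_eq, am_eq]
    push_cast
    rw [Polynomial.coe_X]
    have e1 : ((1 : ℚ⟦X⟧) - PowerSeries.X) * F - 1 = PowerSeries.X^2 * D F := ode.symm
    calc (PowerSeries.X : ℚ⟦X⟧)^2 * aeval F (pd P)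
          + ((1 - PowerSeries.X) * F - 1) * aeval F (Polynomial.derivative P)
        = PowerSeries.X^2
            * (aeval F (Polynomial.derivative P) * D F + aeval F (pd P)) := by
          rw [e1]; ring
      _ = 0 := by rw [← hchain]; ring
  -- coefficients of Q
  have hPder : ∀ i : ℕ, (Polynomial.derivative P).coeff i = P.coeff (i+1) * (i+1) :=
    fun i => Polynomial.coeff_derivative P i
  have hQc : ∀ i : ℕ, Q.coeff i
      = t^2 * Polynomial.derivative (P.coeff i)
        + (1 - t) * (i : Polynomial ℚ) * P.coeff i
        - P.coeff (i+1) * ((i : Polynomial ℚ) + 1) := by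
    intro i
    rw [hQ]
    rw [Polynomial.coeff_add, Polynomial.coeff_C_mul, pd_coeff, sub_mul, one_mul,
      Polynomial.coeff_sub, mul_assoc, Polynomial.coeff_C_mul, hPder]
    rcases i with _ | j
    · simp [Polynomial.mul_coeff_zero]; ring
    · rw [Polynomial.coeff_X_mul, hPder]
      push_cast
      ring
  have hcoefftop : ∀ i : ℕ, d < i → P.coeff i = 0 := by
    intro i hi
    exact Polynomial.coeff_eq_zero_of_natDegree_lt (by omega)
  have hQdeg : Q.natDegree ≤ d := by
    rw [Polynomial.natDegree_le_iff_coeff_eq_zero]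
    intro m hm
    rw [hQc m, hcoefftop m hm, hcoefftop (m+1) (by omega)]
    simp
  -- the cancellation polynomial
  set R : (Polynomial ℚ)[X] :=
    Polynomial.C (P.coeff d) * Q - Polynomial.C (Q.coeff d) * P with hR
  have hRF : aeval F R = 0 := by
    rw [hR, map_sub, map_mul, map_mul, hQF, hPF, mul_zero, mul_zero, sub_zero]
  have hRc : ∀ i : ℕ, R.coeff i = P.coeff d * Q.coeff i - Q.coeff d * P.coeff i := by
    intro i
    rw [hR, Polynomial.coeff_sub, Polynomial.coeff_C_mul, Polynomial.coeff_C_mul]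
  have hRdeg : R.natDegree ≤ d - 1 := by
    rw [Polynomial.natDegree_le_iff_coeff_eq_zero]
    intro m hm
    rcases eq_or_lt_of_le (show d ≤ m by omega) with rfl | hlt
    · rw [hRc]; ring
    · rw [hRc, hcoefftop m hlt,
        Polynomial.coeff_eq_zero_of_natDegree_lt (lt_of_le_of_lt hQdeg hlt)]
      ring
  have hR0 : R = 0 := by
    by_contra hcon
    have := hmin R hcon hRF
    omega
  -- extract the coefficient identity at degree d - 1
  obtain ⟨e, he⟩ : ∃ e, d = e + 1 := ⟨d - 1, by omega⟩
  have hkey : P.coeff d * Q.coeff e - Q.coeff d * P.coeff e = 0 := by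
    rw [← hRc, hR0]; simp
  set q : Polynomial ℚ := P.coeff d with hq'
  set p : Polynomial ℚ := P.coeff e with hp'
  have hqne : q ≠ 0 := by
    rw [hq', ← hPd]
    exact Polynomial.leadingCoeff_ne_zero.mpr hPne
  have hQe : Q.coeff e = t^2 * Polynomial.derivative p
      + (1 - t) * (e : Polynomial ℚ) * p - q * ((e : Polynomial ℚ) + 1) := by
    rw [hQc e, ← hp', ← he, ← hq']
  have hQd : Q.coeff d = t^2 * Polynomial.derivative q
      + (1 - t) * (d : Polynomial ℚ) * q := by
    rw [hQc d, ← hq', hcoefftop (d+1) (by omega)]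
    ring
  rw [hQe, hQd] at hkey
  apply no_sol p q hqne (e+1) (by omega)
  have hcast : ((d : ℕ) : Polynomial ℚ) = (e : Polynomial ℚ) + 1 := by
    rw [he]; push_cast; ring
  rw [ht] at hkey
  rw [hcast] at hkey
  push_cast
  linear_combination hkey

end Stmt18Aux
end Stmt18Aux

theorem stmt18 :
    ¬ IsAlgebraic (Polynomial ℚ)
        (PowerSeries.mk (fun n => (Nat.factorial n : ℚ)) : PowerSeries ℚ) := by
  exact Stmt18Aux.main
end

section
/- Every algebraic formal power series is D-finite: if f ∈ ℚ[[t]] is algebraic over ℚ[t] (i.e., there is a nonzero polynomial P with coefficients in ℚ[t] with P(f) = 0), then there exist L ∈ ℕ and polynomials r₀, r₁, …, r_L ∈ ℚ[t], not all zero, such that Σ_{i=0}^{L} rᵢ(t)·f⁽ⁱ⁾(t) = 0 in ℚ[[t]], where f⁽ⁱ⁾ denotes the i-th formal derivative of f. -/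
open Polynomial PowerSeries Finset

namespace Stmt19

noncomputable def D : Derivation ℚ (PowerSeries ℚ) (PowerSeries ℚ) := PowerSeries.derivative ℚ

noncomputable abbrev φ : Polynomial ℚ →+* PowerSeries ℚ :=
  algebraMap (Polynomial ℚ) (PowerSeries ℚ)

lemma φ_eq (p : Polynomial ℚ) : φ p = (p : PowerSeries ℚ) := by
  ext n
  simp [φ, PowerSeries.algebraMap_apply', Polynomial.coeff_coe]

lemma φ_inj : Function.Injective φ := by
  intro a b h
  rw [φ_eq, φ_eq] at h
  exact_mod_cast Polynomial.coe_injective ℚ h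

lemma D_φ (p : Polynomial ℚ) : D (φ p) = φ (Polynomial.derivative p) := by
  rw [φ_eq, φ_eq]
  exact PowerSeries.derivative_coe p

/-- coefficient-wise derivative -/
noncomputable def tder (S : Polynomial (Polynomial ℚ)) : Polynomial (Polynomial ℚ) :=
  ⟨AddMonoidAlgebra.ofCoeff (S.toFinsupp.coeff.mapRange (⇑Polynomial.derivative) (map_zero _))⟩

lemma coeff_tder (S : Polynomial (Polynomial ℚ)) (n : ℕ) :
    (tder S).coeff n = Polynomial.derivative (S.coeff n) := rfl

lemma tder_add (p q : Polynomial (Polynomial ℚ)) : tder (p + q) = tder p + tder q := by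
  ext n
  simp [coeff_tder]

lemma tder_monomial (n : ℕ) (a : Polynomial ℚ) :
    tder (Polynomial.monomial n a) = Polynomial.monomial n (Polynomial.derivative a) := by
  ext m
  simp only [coeff_tder, Polynomial.coeff_monomial]
  split <;> simp

lemma chain (g : PowerSeries ℚ) (S : Polynomial (Polynomial ℚ)) :
    D (Polynomial.aeval g S) = Polynomial.aeval g (tder S)
      + Polynomial.aeval g (Polynomial.derivative S) * D g := by
  induction S using Polynomial.induction_on' with
  | add p q hp hq =>
    simp only [map_add, hp, hq, Polynomial.derivative_add, tder_add]
    ring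
  | monomial n a =>
    have haev : Polynomial.aeval g (Polynomial.monomial n a) = φ a * g ^ n := by
      simp [Polynomial.aeval_monomial, φ]
    rw [haev, D.leibniz, Derivation.leibniz_pow, D_φ, tder_monomial,
      Polynomial.derivative_monomial]
    simp only [Polynomial.aeval_monomial, smul_eq_mul, map_mul, map_natCast, φ]
    ring

lemma mul_D_pow (a : PowerSeries ℚ) (m : ℕ) :
    a * D (a ^ m) = (m : PowerSeries ℚ) * (a ^ m * D a) := by
  induction m with
  | zero => simp
  | succ m ih =>
    rw [pow_succ, D.leibniz]
    simp only [smul_eq_mul]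
    push_cast
    linear_combination a * ih

noncomputable def Qseq (P : Polynomial (Polynomial ℚ)) : ℕ → Polynomial (Polynomial ℚ)
  | 0 => Polynomial.X
  | i+1 => (Polynomial.derivative P)^2 * tder (Qseq P i)
      - (Polynomial.derivative P) * (Polynomial.derivative (Qseq P i)) * tder P
      - ((2*i : ℕ) : Polynomial (Polynomial ℚ)) *
          ((Polynomial.derivative P * tder (Polynomial.derivative P)
            - Polynomial.derivative (Polynomial.derivative P) * tder P) * Qseq P i)

lemma key (g : PowerSeries ℚ) (P : Polynomial (Polynomial ℚ)) (hP : Polynomial.aeval g P = 0) :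
    ∀ i, (Polynomial.aeval g (Polynomial.derivative P))^(2*i) * (⇑D)^[i] g
      = Polynomial.aeval g (Qseq P i)
  | 0 => by simp [Qseq]
  | (i+1) => by
    set h := Polynomial.aeval g (Polynomial.derivative P) with hh
    have IH := key g P hP i
    have hDg : Polynomial.aeval g (tder P) + h * D g = 0 := by
      have hc := chain g P
      rw [hP, map_zero] at hc
      linear_combination -hc
    have E2 : D (Polynomial.aeval g (Qseq P i)) = Polynomial.aeval g (tder (Qseq P i))
        + Polynomial.aeval g (Polynomial.derivative (Qseq P i)) * D g := chain g _
    have E3 : D (Polynomial.aeval g (Qseq P i))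
        = h^(2*i) * D ((⇑D)^[i] g) + (⇑D)^[i] g * D (h^(2*i)) := by
      rw [← IH, D.leibniz]
      simp only [smul_eq_mul]
      rw [← hh]
    have E5 : D h = Polynomial.aeval g (tder (Polynomial.derivative P))
        + Polynomial.aeval g (Polynomial.derivative (Polynomial.derivative P)) * D g :=
      chain g _
    have hW : h * D h = h * Polynomial.aeval g (tder (Polynomial.derivative P))
        - Polynomial.aeval g (Polynomial.derivative (Polynomial.derivative P))
          * Polynomial.aeval g (tder P) := by
      linear_combination h * E5
        + Polynomial.aeval g (Polynomial.derivative (Polynomial.derivative P)) * hDg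
    have E6 : h * D (h^(2*i)) = ((2*i : ℕ) : PowerSeries ℚ) * (h^(2*i) * D h) :=
      mul_D_pow h (2*i)
    have hdp3 : h^2 * D (h^(2*i)) = ((2*i : ℕ) : PowerSeries ℚ)
        * (h^(2*i) * (h * Polynomial.aeval g (tder (Polynomial.derivative P))
          - Polynomial.aeval g (Polynomial.derivative (Polynomial.derivative P))
            * Polynomial.aeval g (tder P))) := by
      linear_combination h * E6 + ((2*i : ℕ) : PowerSeries ℚ) * h^(2*i) * hW
    rw [Function.iterate_succ_apply']
    simp only [Qseq, map_sub, map_mul, map_pow, map_natCast, ← hh]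
    push_cast
    push_cast at hdp3
    linear_combination (h^2) * E2 - (h^2) * E3
      + (h * Polynomial.aeval g (Polynomial.derivative (Qseq P i))) * hDg
      - ((⇑D)^[i] g) * hdp3
      - (2*(i:PowerSeries ℚ)) * (h * Polynomial.aeval g (tder (Polynomial.derivative P))
          - Polynomial.aeval g (Polynomial.derivative (Polynomial.derivative P))
            * Polynomial.aeval g (tder P)) * IH

lemma D_iter_mul (d : Polynomial ℚ) (f : PowerSeries ℚ) (n : ℕ) :
    (⇑D)^[n] (φ d * f) =
      ∑ k ∈ range n.succ,
        n.choose k • (φ ((⇑Polynomial.derivative)^[n - k] d) * (⇑D)^[k] f) := by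
  induction n with
  | zero => simp
  | succ n IH =>
    have hD1 : ∀ (a : Polynomial ℚ) (x : PowerSeries ℚ),
        D (φ a * x) = φ (Polynomial.derivative a) * x + φ a * D x := by
      intro a x
      rw [D.leibniz, D_φ]
      simp only [smul_eq_mul]
      ring
    calc
      (⇑D)^[n + 1] (φ d * f) =
          D (∑ k ∈ range n.succ,
              n.choose k • (φ ((⇑Polynomial.derivative)^[n - k] d) * (⇑D)^[k] f)) := by
        rw [Function.iterate_succ_apply', IH]
      _ = (∑ k ∈ range n.succ,
            n.choose k • (φ ((⇑Polynomial.derivative)^[n - k + 1] d) * (⇑D)^[k] f)) +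
          ∑ k ∈ range n.succ,
            n.choose k • (φ ((⇑Polynomial.derivative)^[n - k] d) * (⇑D)^[k + 1] f) := by
        rw [map_sum]
        simp_rw [Derivation.map_smul_of_tower, hD1, smul_add, sum_add_distrib,
          Function.iterate_succ_apply']
      _ = (∑ k ∈ range n.succ,
                n.choose k.succ • (φ ((⇑Polynomial.derivative)^[n - k] d) * (⇑D)^[k + 1] f)) +
              1 • (φ ((⇑Polynomial.derivative)^[n + 1] d) * (⇑D)^[0] f) +
            ∑ k ∈ range n.succ,
              n.choose k • (φ ((⇑Polynomial.derivative)^[n - k] d) * (⇑D)^[k + 1] f) := ?_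
      _ = ((∑ k ∈ range n.succ,
              n.choose k • (φ ((⇑Polynomial.derivative)^[n - k] d) * (⇑D)^[k + 1] f)) +
              ∑ k ∈ range n.succ,
                n.choose k.succ • (φ ((⇑Polynomial.derivative)^[n - k] d) * (⇑D)^[k + 1] f)) +
            1 • (φ ((⇑Polynomial.derivative)^[n + 1] d) * (⇑D)^[0] f) := by
        rw [add_comm, add_assoc]
      _ = (∑ i ∈ range n.succ,
              (n + 1).choose (i + 1) •
                (φ ((⇑Polynomial.derivative)^[n + 1 - (i + 1)] d) * (⇑D)^[i + 1] f)) +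
            1 • (φ ((⇑Polynomial.derivative)^[n + 1] d) * (⇑D)^[0] f) := by
        simp_rw [Nat.choose_succ_succ, Nat.succ_sub_succ, add_smul, sum_add_distrib]
      _ = ∑ k ∈ range n.succ.succ,
            n.succ.choose k • (φ ((⇑Polynomial.derivative)^[n.succ - k] d) * (⇑D)^[k] f) := by
        rw [sum_range_succ' _ n.succ, Nat.choose_zero_right, tsub_zero]
    congr
    refine (sum_range_succ' _ _).trans (congr_arg₂ (· + ·) ?_ ?_)
    · rw [sum_range_succ, Nat.choose_succ_self, zero_smul, add_zero]
      refine sum_congr rfl fun k hk => ?_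
      rw [mem_range] at hk
      congr
      omega
    · simp


lemma integral_main (g : PowerSeries ℚ) (hg : IsIntegral (Polynomial ℚ) g) :
    ∃ (N : ℕ) (c : ℕ → Polynomial ℚ), c N ≠ 0 ∧
      ∑ i ∈ range (N+1), φ (c i) * (⇑D)^[i] g = 0 := by
  classical
  set P := minpoly (Polynomial ℚ) g with hPdef
  have hmo : P.Monic := minpoly.monic hg
  have hP0 : Polynomial.aeval g P = 0 := minpoly.aeval _ _
  set n := P.natDegree with hndef
  have hn : 0 < n := minpoly.natDegree_pos hg
  set h := Polynomial.aeval g (Polynomial.derivative P) with hhdef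
  -- h ≠ 0
  have hne : h ≠ 0 := by
    intro h0
    have hnq : ((n:ℚ)) ≠ 0 := by exact_mod_cast hn.ne'
    have hco : (Polynomial.derivative P).coeff (n-1) = (n : Polynomial ℚ) := by
      rw [Polynomial.coeff_derivative, Nat.sub_add_cancel hn, hmo.coeff_natDegree, one_mul]
      norm_cast
      omega
    have hndeg : (Polynomial.derivative P).natDegree = n - 1 := by
      refine le_antisymm (Polynomial.natDegree_derivative_le P) ?_
      apply Polynomial.le_natDegree_of_ne_zero
      rw [hco]
      exact_mod_cast Nat.cast_ne_zero.mpr hn.ne'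
    have hlcd : (Polynomial.derivative P).leadingCoeff = (n : Polynomial ℚ) := by
      rw [Polynomial.leadingCoeff, hndeg, hco]
    have hdegd : (Polynomial.derivative P).degree < P.degree :=
      Polynomial.degree_derivative_lt hmo.ne_zero
    set q : Polynomial (Polynomial ℚ) :=
      Polynomial.C (Polynomial.C ((n:ℚ)⁻¹)) * Polynomial.derivative P with hqdef
    have hq_monic : q.Monic := by
      unfold Polynomial.Monic
      rw [hqdef, Polynomial.leadingCoeff_mul, Polynomial.leadingCoeff_C, hlcd]
      rw [← Polynomial.C_eq_natCast, ← Polynomial.C_mul, inv_mul_cancel₀ hnq, Polynomial.C_1]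
    have haq : Polynomial.aeval g q = 0 := by
      rw [hqdef, map_mul, ← hhdef, h0, mul_zero]
    have hdq : q.degree < P.degree := by
      refine lt_of_le_of_lt ?_ hdegd
      calc q.degree ≤ (Polynomial.C (Polynomial.C ((n:ℚ)⁻¹))).degree
            + (Polynomial.derivative P).degree := Polynomial.degree_mul_le _ _
        _ ≤ 0 + (Polynomial.derivative P).degree := by
            exact add_le_add Polynomial.degree_C_le le_rfl
        _ = (Polynomial.derivative P).degree := by rw [zero_add]
    exact absurd (minpoly.min _ g hq_monic haq) (not_le.mpr hdq)
  -- the family V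
  set V : Fin (n+1) → Polynomial (Polynomial ℚ) :=
    fun i => (Polynomial.derivative P)^(2*(n - (i:ℕ))) * Qseq P (i:ℕ) with hVdef
  have hV : ∀ i : Fin (n+1), Polynomial.aeval g (V i) = h^(2*n) * (⇑D)^[(i:ℕ)] g := by
    intro i
    rw [hVdef]
    simp only [map_mul, map_pow]
    rw [← key g P hP0 (i:ℕ), ← hhdef, ← mul_assoc, ← pow_add]
    congr 2
    have := i.is_le
    omega
  -- linear dependence of remainders
  set w : Fin (n+1) → (Fin n → Polynomial ℚ) :=
    fun i j => ((V i) %ₘ P).coeff (j:ℕ) with hwdef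
  have hdep : ¬ LinearIndependent (Polynomial ℚ) w := by
    intro hli
    have hcard := hli.fintype_card_le_finrank
    rw [Module.finrank_pi] at hcard
    simp only [Fintype.card_fin] at hcard
    omega
  obtain ⟨c, hc0, i₀, hci⟩ := Fintype.not_linearIndependent_iff.mp hdep
  -- the sum of remainders vanishes
  have hS : ∑ i : Fin (n+1), c i • ((V i) %ₘ P) = 0 := by
    apply Polynomial.ext
    intro j
    rw [Polynomial.finset_sum_coeff]
    simp only [Polynomial.coeff_smul, smul_eq_mul, Polynomial.coeff_zero]
    by_cases hj : j < n
    · have := congrFun hc0 ⟨j, hj⟩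
      simpa [hwdef, Finset.sum_apply] using this
    · apply Finset.sum_eq_zero
      intro i _
      have hdeg : ((V i) %ₘ P).degree < P.degree := Polynomial.degree_modByMonic_lt _ hmo
      have hz : ((V i) %ₘ P).coeff j = 0 := by
        apply Polynomial.coeff_eq_zero_of_degree_lt
        refine lt_of_lt_of_le hdeg ?_
        rw [Polynomial.degree_eq_natDegree hmo.ne_zero]
        exact_mod_cast Nat.not_lt.mp hj
      rw [hz, mul_zero]
  -- sum of c i • V i is a multiple of P
  have hVsum : ∑ i : Fin (n+1), c i • V i
      = P * ∑ i : Fin (n+1), c i • ((V i) /ₘ P) := by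
    have hsplit : ∀ i : Fin (n+1),
        c i • V i = c i • ((V i) %ₘ P) + P * (c i • ((V i) /ₘ P)) := by
      intro i
      conv_lhs => rw [← Polynomial.modByMonic_add_div (V i) P]
      rw [smul_add, mul_smul_comm]
    rw [Finset.sum_congr rfl (fun i _ => hsplit i), sum_add_distrib, hS, zero_add,
      ← Finset.mul_sum]
  -- evaluate at g
  have h1 : ∑ i : Fin (n+1), φ (c i) * ((⇑D)^[(i:ℕ)] g) = 0 := by
    have h2 := congrArg (Polynomial.aeval g) hVsum
    rw [map_sum, map_mul, hP0, zero_mul] at h2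
    simp only [map_smul, hV] at h2
    simp only [Algebra.smul_def] at h2
    have h3 : h^(2*n) * ∑ i : Fin (n+1), φ (c i) * ((⇑D)^[(i:ℕ)] g) = 0 := by
      rw [Finset.mul_sum]
      rw [← h2]
      apply Finset.sum_congr rfl
      intro i _
      ring
    rcases mul_eq_zero.mp h3 with hc | hc
    · exact absurd hc (pow_ne_zero _ hne)
    · exact hc
  -- convert to range sum and truncate at top nonzero index
  set c' : ℕ → Polynomial ℚ := fun i => if hi : i < n+1 then c ⟨i, hi⟩ else 0 with hc'def
  have hsum' : ∑ i ∈ range (n+1), φ (c' i) * (⇑D)^[i] g = 0 := by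
    rw [← Fin.sum_univ_eq_sum_range (fun i => φ (c' i) * (⇑D)^[i] g) (n+1)]
    rw [← h1]
    apply Finset.sum_congr rfl
    intro i _
    congr 2
    simp [hc'def, i.isLt, i.is_le]
  have hex : c' (i₀ : ℕ) ≠ 0 := by
    simpa [hc'def, i₀.isLt, i₀.is_le] using hci
  set L := Nat.findGreatest (fun i => c' i ≠ 0) n with hLdef
  have hLne : c' L ≠ 0 := by
    rw [hLdef]
    exact Nat.findGreatest_spec (P := fun i => c' i ≠ 0) i₀.is_le hex
  have hLle : L ≤ n := Nat.findGreatest_le n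
  refine ⟨L, c', hLne, ?_⟩
  rw [Finset.sum_subset (Finset.range_subset_range.mpr (by omega : L + 1 ≤ n + 1))]
  · exact hsum'
  · intro k hk1 hk2
    rw [Finset.mem_range] at hk1
    rw [Finset.mem_range] at hk2
    have hck : c' k = 0 := by
      by_contra hcc
      have hgt : L < k := by omega
      rw [hLdef] at hgt
      exact Nat.findGreatest_is_greatest hgt (by omega) hcc
    rw [hck, map_zero, zero_mul]


lemma inj' : ∀ x : Polynomial ℚ, algebraMap (Polynomial ℚ) (PowerSeries ℚ) x = 0 → x = 0 :=
  fun p hp => φ_inj (by rw [hp, map_zero])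

end Stmt19

open Stmt19 in
theorem stmt19 (f : PowerSeries ℚ) (hf : IsAlgebraic (Polynomial ℚ) f) :
    ∃ (L : ℕ) (r : Fin (L + 1) → Polynomial ℚ), (∃ i, r i ≠ 0) ∧
      ∑ i : Fin (L + 1), (r i : PowerSeries ℚ) *
        (⇑(PowerSeries.derivative ℚ))^[(i : ℕ)] f = 0 := by
  classical
  obtain ⟨d, hd0, hx⟩ := IsAlgebraic.exists_integral_multiple hf
  have hgint : IsIntegral (Polynomial ℚ) (φ d * f) := by
    rw [Algebra.smul_def] at hx
    exact hx
  obtain ⟨N, c, hcN, hsum⟩ := integral_main (φ d * f) hgint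
  set s : ℕ → Polynomial ℚ := fun j => ∑ i ∈ range (N+1),
      (i.choose j) • (c i * (⇑Polynomial.derivative)^[i-j] d) with hsdef
  have hsN : s N = c N * d := by
    simp only [hsdef]
    rw [Finset.sum_eq_single_of_mem N (Finset.self_mem_range_succ N)]
    · simp
    · intro i hi hne
      have hilt : i < N := by rw [Finset.mem_range] at hi; omega
      rw [Nat.choose_eq_zero_of_lt hilt, zero_smul]
  have hsN0 : s N ≠ 0 := by rw [hsN]; exact mul_ne_zero hcN hd0
  have hmain : ∑ j ∈ range (N+1), φ (s j) * (⇑D)^[j] f = 0 := by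
    calc ∑ j ∈ range (N+1), φ (s j) * (⇑D)^[j] f
        = ∑ j ∈ range (N+1), ∑ i ∈ range (N+1),
            (i.choose j) • (φ (c i * (⇑Polynomial.derivative)^[i-j] d) * (⇑D)^[j] f) := by
          apply Finset.sum_congr rfl
          intro j _
          simp only [hsdef]
          rw [map_sum, Finset.sum_mul]
          apply Finset.sum_congr rfl
          intro i _
          rw [map_nsmul, smul_mul_assoc]
      _ = ∑ i ∈ range (N+1), ∑ j ∈ range (N+1),
            (i.choose j) • (φ (c i * (⇑Polynomial.derivative)^[i-j] d) * (⇑D)^[j] f) :=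
          Finset.sum_comm
      _ = ∑ i ∈ range (N+1), φ (c i) * (⇑D)^[i] (φ d * f) := by
          apply Finset.sum_congr rfl
          intro i hi
          rw [D_iter_mul, Finset.mul_sum]
          have hss : range (i+1) ⊆ range (N+1) := by
            rw [Finset.mem_range] at hi
            exact Finset.range_subset_range.mpr (by omega)
          rw [← Finset.sum_subset hss ?_]
          · apply Finset.sum_congr rfl
            intro k _
            rw [map_mul, mul_smul_comm, mul_assoc]
          · intro k hk1 hk2
            rw [Finset.mem_range] at hk1 hk2
            rw [Nat.choose_eq_zero_of_lt (by omega), zero_smul]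
      _ = 0 := hsum
  refine ⟨N, fun j => s j, ⟨⟨N, Nat.lt_succ_self N⟩, hsN0⟩, ?_⟩
  rw [← Fin.sum_univ_eq_sum_range (fun j => φ (s j) * (⇑D)^[j] f) (N+1)] at hmain
  simpa [φ_eq, D] using hmain
end
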